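/- arXiv:2502.06514 — 2 statements merged into one kernel-verified Lean document; each statement's English description precedes it below -/
import Mathlib

section
/- Fix N ∈ ℕ, j ∈ {1,…,N}, T > 0, σ > 0, L ≥ 0, and measurable a^i, c^{i,k} : [0,T] → ℝ with |a^i(r)| ≤ L and |c^{i,k}(r)| ≤ L for all i,k,r. For each u ∈ [0,T] let d_u¹,…,d_u^N : [u,T] → ℝ be continuous functions satisfying d_u^i(t) = σ·1_{i=j} + ∫_u^t ( a^i(r) d_u^i(r) + N^{−1} ∑_{k=1}^N c^{i,k}(r) d_u^k(r) ) dr. Then there exists a constant C depending only on σ, L, T such that for all i ∈ {1,…,N} and all 0 ≤ v ≤ u ≤ s ≤ t ≤ T: |d_u^i(t) − d_v^i(t)| ≤ C|u−v|(1_{i=j} + 1/N); |d_u^i(t) − d_u^i(s)| ≤ C|t−s|(1_{i=j} + 1/N); and |d_u^i(t) − d_v^i(t) − d_u^i(s) + d_v^i(s)| ≤ C(1 ∧ |u−v|)(1 ∧ |t−s|)(1_{i=j} + 1/N). -/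
open MeasureTheory Set intervalIntegral Real

/-- Integral form of Grönwall's inequality. -/
lemma gronwall_int {u b A K : ℝ} (hub : u ≤ b) (hA : 0 ≤ A) (hK : 0 ≤ K)
    {f : ℝ → ℝ} (hf : ContinuousOn f (Set.Icc u b))
    (hpos : ∀ t ∈ Set.Icc u b, 0 ≤ f t)
    (hle : ∀ t ∈ Set.Icc u b, f t ≤ A + ∫ r in u..t, K * f r) :
    ∀ t ∈ Set.Icc u b, f t ≤ A * Real.exp (K * (t - u)) := by
  set g : ℝ → ℝ := Set.IccExtend hub ((Set.Icc u b).restrict f) with hg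
  have hgeq : ∀ x ∈ Set.Icc u b, g x = f x := by
    intro x hx
    simp [hg, Set.IccExtend_of_mem hub _ hx]; rfl
  have hgc : Continuous g :=
    continuous_IccExtend_iff.2 (continuousOn_iff_continuous_restrict.1 hf)
  have hKg : Continuous fun r => K * g r := continuous_const.mul hgc
  have hint : ∀ s t : ℝ, IntervalIntegrable (fun r => K * g r) volume s t :=
    fun s t => hKg.intervalIntegrable s t
  have hsub : ∀ t ∈ Set.Icc u b, Set.uIcc u t ⊆ Set.Icc u b := by
    intro t ht
    rw [Set.uIcc_of_le ht.1]
    exact Set.Icc_subset_Icc le_rfl ht.2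
  have hintcong : ∀ t ∈ Set.Icc u b, (∫ r in u..t, K * g r) = ∫ r in u..t, K * f r := by
    intro t ht
    exact intervalIntegral.integral_congr fun x hx => by simp [hgeq x (hsub t ht hx)]
  set φ : ℝ → ℝ := fun t => A + ∫ r in u..t, K * g r with hφ
  have hφd : ∀ x : ℝ, HasDerivAt φ (K * g x) x := by
    intro x
    exact (intervalIntegral.integral_hasDerivAt_right (hint u x)
      (hKg.stronglyMeasurable.stronglyMeasurableAtFilter)
      (hKg.continuousAt)).const_add A
  have hφc : Continuous φ := by
    rw [continuous_iff_continuousAt]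
    exact fun x => (hφd x).continuousAt
  have hφpos : ∀ x ∈ Set.Icc u b, 0 ≤ φ x := by
    intro x hx
    have : 0 ≤ ∫ r in u..x, K * g r := by
      refine intervalIntegral.integral_nonneg hx.1 fun r hr => ?_
      have hr' : r ∈ Set.Icc u b := ⟨hr.1, hr.2.trans hx.2⟩
      rw [hgeq r hr']
      exact mul_nonneg hK (hpos r hr')
    simp only [hφ]
    linarith
  have hfφ : ∀ x ∈ Set.Icc u b, f x ≤ φ x := by
    intro x hx
    rw [hφ]
    calc f x ≤ A + ∫ r in u..x, K * f r := hle x hx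
    _ = A + ∫ r in u..x, K * g r := by rw [hintcong x hx]
  have key : ∀ x ∈ Set.Icc u b, ‖φ x‖ ≤ gronwallBound A K 0 (x - u) := by
    refine norm_le_gronwallBound_of_norm_deriv_right_le hφc.continuousOn
      (fun x _ => (hφd x).hasDerivWithinAt) ?_ ?_
    · simp only [hφ, intervalIntegral.integral_same, add_zero]
      rw [Real.norm_of_nonneg hA]
    · intro x hx
      have hx' : x ∈ Set.Icc u b := ⟨hx.1, hx.2.le⟩
      rw [Real.norm_of_nonneg (hφpos x hx'), Real.norm_of_nonneg
        (mul_nonneg hK (by rw [hgeq x hx']; exact hpos x hx'))]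
      rw [hgeq x hx']
      have := hfφ x hx'
      nlinarith [hpos x hx']
  intro t ht
  have h1 := key t ht
  rw [gronwallBound_ε0, Real.norm_of_nonneg (hφpos t ht)] at h1
  exact (hfφ t ht).trans h1

/-- Grönwall with a constant forcing term. -/
lemma gronwall_int' {u b A K B : ℝ} (hub : u ≤ b) (hA : 0 ≤ A) (hK : 0 ≤ K) (hB : 0 ≤ B)
    {f : ℝ → ℝ} (hf : ContinuousOn f (Set.Icc u b))
    (hpos : ∀ t ∈ Set.Icc u b, 0 ≤ f t)
    (hle : ∀ t ∈ Set.Icc u b, f t ≤ A + ∫ r in u..t, (K * f r + B)) :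
    ∀ t ∈ Set.Icc u b, f t ≤ (A + B * (b - u)) * Real.exp (K * (b - u)) := by
  have key := gronwall_int (A := A + B * (b - u)) hub (by nlinarith) hK hf hpos
    (fun t ht => ?_)
  · intro t ht
    refine (key t ht).trans ?_
    have h1 : Real.exp (K * (t - u)) ≤ Real.exp (K * (b - u)) :=
      Real.exp_le_exp.2 (by nlinarith [ht.2])
    exact mul_le_mul_of_nonneg_left h1 (by nlinarith)
  · have hKf : IntervalIntegrable (fun r => K * f r) volume u t := by
      apply ContinuousOn.intervalIntegrable
      rw [Set.uIcc_of_le ht.1]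
      exact (continuous_const.comp_continuousOn
        (hf.mono (Set.Icc_subset_Icc le_rfl ht.2))).mul
        (hf.mono (Set.Icc_subset_Icc le_rfl ht.2)) |>.congr fun x hx => rfl
    calc f t ≤ A + ∫ r in u..t, (K * f r + B) := hle t ht
    _ = A + ((∫ r in u..t, K * f r) + ∫ r in u..t, (B:ℝ)) := by
        rw [intervalIntegral.integral_add hKf (intervalIntegrable_const)]
    _ = A + B * (t - u) + ∫ r in u..t, K * f r := by
        rw [intervalIntegral.integral_const]
        simp [smul_eq_mul]
        ring
    _ ≤ A + B * (b - u) + ∫ r in u..t, K * f r := by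
        have := ht.2
        nlinarith

/-- integrability of a product of a bounded measurable function and a continuous function. -/
lemma prod_intble {a g : ℝ → ℝ} {L p q s t : ℝ} (ha : Measurable a)
    (hg : ContinuousOn g (Set.Icc p q)) (haL : ∀ r ∈ Set.Icc p q, |a r| ≤ L) (hL : 0 ≤ L)
    (hsub : Set.uIcc s t ⊆ Set.Icc p q) :
    IntervalIntegrable (fun r => a r * g r) volume s t := by
  obtain ⟨M, hM⟩ := isCompact_Icc.exists_bound_of_continuousOn hg
  rw [intervalIntegrable_iff]
  have hsub' : Set.uIoc s t ⊆ Set.Icc p q := Set.uIoc_subset_uIcc.trans hsub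
  have hmeas : AEStronglyMeasurable (fun r => a r * g r)
      (volume.restrict (Set.uIoc s t)) := by
    refine AEStronglyMeasurable.mul ha.aestronglyMeasurable ?_
    exact (hg.aestronglyMeasurable measurableSet_Icc).mono_measure
      (Measure.restrict_mono hsub' le_rfl)
  refine Integrable.mono' (g := fun _ => L * M)
    (integrableOn_const ?_) hmeas ?_
  · rw [Set.uIoc]
    exact measure_Ioc_lt_top.ne
  · refine (ae_restrict_iff' measurableSet_uIoc).2 (Filter.Eventually.of_forall
      fun r hr => ?_)
    have hr' := hsub' hr
    rw [Real.norm_eq_abs, abs_mul]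
    exact mul_le_mul (haL r hr') (by simpa using hM r hr') (abs_nonneg _) hL

/-- integrability of the Volterra integrand. -/
lemma integrand_intble {N : ℕ} {T L u : ℝ} {a : Fin N → ℝ → ℝ}
    {c : Fin N → Fin N → ℝ → ℝ} (ha : ∀ i, Measurable (a i))
    (hc : ∀ i k, Measurable (c i k))
    (haL : ∀ i, ∀ r ∈ Set.Icc (0:ℝ) T, |a i r| ≤ L)
    (hcL : ∀ i k, ∀ r ∈ Set.Icc (0:ℝ) T, |c i k r| ≤ L) (hL : 0 ≤ L)
    (hu : 0 ≤ u) {g : Fin N → ℝ → ℝ} (hgc : ∀ k, ContinuousOn (g k) (Set.Icc u T))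
    (i : Fin N) {s t : ℝ} (hs : s ∈ Set.Icc u T) (ht : t ∈ Set.Icc u T) :
    IntervalIntegrable
      (fun r => a i r * g i r + (N:ℝ)⁻¹ * ∑ k, c i k r * g k r) volume s t := by
  have hsub : Set.uIcc s t ⊆ Set.Icc u T := Set.uIcc_subset_Icc hs ht
  have hIccsub : Set.Icc u T ⊆ Set.Icc (0:ℝ) T := Set.Icc_subset_Icc hu le_rfl
  have h1 : IntervalIntegrable (fun r => a i r * g i r) volume s t :=
    prod_intble (ha i) (hgc i) (fun r hr => haL i r (hIccsub hr)) hL hsub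
  have h3 : IntervalIntegrable (∑ k, fun r => c i k r * g k r) volume s t :=
    IntervalIntegrable.sum Finset.univ (fun k _ =>
      prod_intble (hc i k) (hgc k) (fun r hr => hcL i k r (hIccsub hr)) hL hsub)
  have h3' : IntervalIntegrable (fun r => ∑ k, c i k r * g k r) volume s t := by
    have : (∑ k, fun r => c i k r * g k r) = fun r => ∑ k, c i k r * g k r := by
      ext r
      simp
    rwa [this] at h3
  exact h1.add (h3'.const_mul _)

noncomputable def CCfun (L T : ℝ) : ℝ :=
  (1 + L * T * Real.exp (2 * L * T)) * Real.exp (L * T) + Real.exp (2 * L * T)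

noncomputable def CC2fun (L T : ℝ) : ℝ := L * CCfun L T + L * Real.exp (2 * L * T)

lemma CCfun_pos {L T : ℝ} (hL : 0 ≤ L) (hT : 0 ≤ T) : 0 < CCfun L T := by
  have h1 := Real.exp_pos (L * T)
  have h2 := Real.exp_pos (2 * L * T)
  have h3 : 0 ≤ L * T := mul_nonneg hL hT
  unfold CCfun
  nlinarith [mul_pos (show (0:ℝ) < 1 + L * T * rexp (2*L*T) by nlinarith) h1]

lemma CC2fun_nonneg {L T : ℝ} (hL : 0 ≤ L) (hT : 0 ≤ T) : 0 ≤ CC2fun L T :=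
  add_nonneg (mul_nonneg hL (CCfun_pos hL hT).le)
    (mul_nonneg hL (Real.exp_pos _).le)

set_option maxHeartbeats 1000000 in
/-- Core a-priori estimates for a linear Volterra system. -/
lemma core_volterra {T L : ℝ} (hT : 0 < T) (hL : 0 ≤ L) {N : ℕ} (hN : 0 < N) (j : Fin N)
    {a : Fin N → ℝ → ℝ} {c : Fin N → Fin N → ℝ → ℝ}
    (ha : ∀ i, Measurable (a i)) (hc : ∀ i k, Measurable (c i k))
    (haL : ∀ i, ∀ r ∈ Set.Icc (0:ℝ) T, |a i r| ≤ L)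
    (hcL : ∀ i k, ∀ r ∈ Set.Icc (0:ℝ) T, |c i k r| ≤ L)
    {u : ℝ} (hu : u ∈ Set.Icc (0:ℝ) T)
    {g : Fin N → ℝ → ℝ} (hgc : ∀ i, ContinuousOn (g i) (Set.Icc u T))
    (heq : ∀ i, ∀ t ∈ Set.Icc u T,
      g i t = g i u + ∫ r in u..t, (a i r * g i r + (N:ℝ)⁻¹ * ∑ k, c i k r * g k r))
    {β γ : ℝ} (hβ : 0 ≤ β) (hγ : 0 ≤ γ)
    (hinit : ∀ i, |g i u| ≤ β + (if i = j then γ else 0)) :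
    (∀ i, ∀ t ∈ Set.Icc u T,
      |g i t| ≤ CCfun L T * ((N:ℝ) * β + γ) * ((if i = j then 1 else 0) + 1/(N:ℝ))) ∧
    (∀ i, ∀ s t : ℝ, u ≤ s → s ≤ t → t ≤ T →
      |g i t - g i s| ≤ CC2fun L T * ((N:ℝ) * β + γ) * (t - s)
        * ((if i = j then 1 else 0) + 1/(N:ℝ))) := by
  obtain ⟨hu0, huT⟩ := hu
  have hn : (0:ℝ) < (N:ℝ) := Nat.cast_pos.2 hN
  have hNB : (0:ℝ) ≤ (N:ℝ)*β+γ := by positivity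
  have e1pos := Real.exp_pos (L*T)
  have e2pos := Real.exp_pos (2*L*T)
  have hFint : ∀ i, ∀ s t : ℝ, s ∈ Set.Icc u T → t ∈ Set.Icc u T →
      IntervalIntegrable
        (fun r => a i r * g i r + (N:ℝ)⁻¹ * ∑ k, c i k r * g k r) volume s t :=
    fun i s t hs ht => integrand_intble ha hc haL hcL hL hu0 hgc i hs ht
  -- pointwise bound on the integrand
  have hFbd : ∀ i, ∀ r ∈ Set.Icc u T,
      |a i r * g i r + (N:ℝ)⁻¹ * ∑ k, c i k r * g k r|
        ≤ L * |g i r| + (L/(N:ℝ)) * ∑ k, |g k r| := by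
    intro i r hr
    have hr0 : r ∈ Set.Icc (0:ℝ) T := ⟨hu0.trans hr.1, hr.2⟩
    have h1 : |a i r * g i r| ≤ L * |g i r| := by
      rw [abs_mul]
      exact mul_le_mul_of_nonneg_right (haL i r hr0) (abs_nonneg _)
    have h2 : |(N:ℝ)⁻¹ * ∑ k, c i k r * g k r| ≤ (L/(N:ℝ)) * ∑ k, |g k r| := by
      rw [abs_mul, abs_of_nonneg (inv_nonneg.2 hn.le)]
      have h3 : |∑ k, c i k r * g k r| ≤ L * ∑ k, |g k r| := by
        refine (Finset.abs_sum_le_sum_abs _ _).trans ?_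
        rw [Finset.mul_sum]
        refine Finset.sum_le_sum fun k _ => ?_
        rw [abs_mul]
        exact mul_le_mul_of_nonneg_right (hcL i k r hr0) (abs_nonneg _)
      calc (N:ℝ)⁻¹ * |∑ k, c i k r * g k r| ≤ (N:ℝ)⁻¹ * (L * ∑ k, |g k r|) :=
        mul_le_mul_of_nonneg_left h3 (inv_nonneg.2 hn.le)
      _ = (L/(N:ℝ)) * ∑ k, |g k r| := by field_simp
    calc |a i r * g i r + (N:ℝ)⁻¹ * ∑ k, c i k r * g k r|
        ≤ |a i r * g i r| + |(N:ℝ)⁻¹ * ∑ k, c i k r * g k r| := abs_add_le _ _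
    _ ≤ L * |g i r| + (L/(N:ℝ)) * ∑ k, |g k r| := add_le_add h1 h2
  have hScont : ContinuousOn (fun t => ∑ k, |g k t|) (Set.Icc u T) :=
    continuousOn_finset_sum _ fun k _ => (hgc k).abs
  have hSpos : ∀ t ∈ Set.Icc u T, 0 ≤ ∑ k, |g k t| := fun t _ =>
    Finset.sum_nonneg fun k _ => abs_nonneg _
  have hρcont : ∀ i, ContinuousOn
      (fun r => L * |g i r| + (L/(N:ℝ)) * ∑ k, |g k r|) (Set.Icc u T) :=
    fun i => (continuousOn_const.mul (hgc i).abs).add (continuousOn_const.mul hScont)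
  have hρint : ∀ i, ∀ s t : ℝ, u ≤ s → s ≤ t → t ≤ T →
      IntervalIntegrable
        (fun r => L * |g i r| + (L/(N:ℝ)) * ∑ k, |g k r|) volume s t := by
    intro i s t hus hst htT
    apply ContinuousOn.intervalIntegrable
    exact (hρcont i).mono (by rw [Set.uIcc_of_le hst]; exact Set.Icc_subset_Icc hus htT)
  have hgd : ∀ i, ∀ s t : ℝ, u ≤ s → s ≤ t → t ≤ T → g i t - g i s
      = ∫ r in s..t, (a i r * g i r + (N:ℝ)⁻¹ * ∑ k, c i k r * g k r) := by
    intro i s t hus hst htT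
    have hsI : s ∈ Set.Icc u T := ⟨hus, hst.trans htT⟩
    have htI : t ∈ Set.Icc u T := ⟨hus.trans hst, htT⟩
    have h := intervalIntegral.integral_interval_sub_left
      (hFint i u t ⟨le_rfl, huT⟩ htI) (hFint i u s ⟨le_rfl, huT⟩ hsI)
    rw [heq i t htI, heq i s hsI]
    linarith [h]
  have hstep : ∀ i, ∀ s t : ℝ, u ≤ s → s ≤ t → t ≤ T →
      |g i t - g i s| ≤ ∫ r in s..t, (L * |g i r| + (L/(N:ℝ)) * ∑ k, |g k r|) := by
    intro i s t hus hst htT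
    rw [hgd i s t hus hst htT]
    have hρpos : 0 ≤ ∫ r in s..t, (L * |g i r| + (L/(N:ℝ)) * ∑ k, |g k r|) := by
      refine intervalIntegral.integral_nonneg hst fun x hx => ?_
      have : (0:ℝ) ≤ ∑ k, |g k x| := Finset.sum_nonneg fun k _ => abs_nonneg _
      positivity
    have hnorm : ‖∫ r in s..t, (a i r * g i r + (N:ℝ)⁻¹ * ∑ k, c i k r * g k r)‖
        ≤ |∫ r in s..t, (L * |g i r| + (L/(N:ℝ)) * ∑ k, |g k r|)| := by
      refine intervalIntegral.norm_integral_le_abs_of_norm_le (μ := volume)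
        (f := fun r => a i r * g i r + (N:ℝ)⁻¹ * ∑ k, c i k r * g k r)
        ?_ (hρint i s t hus hst htT)
      refine (ae_restrict_iff' measurableSet_uIoc).2 (Filter.Eventually.of_forall
        fun r hr => ?_)
      rw [Set.uIoc_of_le hst] at hr
      have hr' : r ∈ Set.Icc u T := ⟨hus.trans hr.1.le, hr.2.trans htT⟩
      rw [Real.norm_eq_abs]
      exact hFbd i r hr'
    rw [abs_of_nonneg hρpos] at hnorm
    simpa [Real.norm_eq_abs] using hnorm
  have hSu : ∑ k, |g k u| ≤ (N:ℝ) * β + γ := by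
    have h1 : ∑ k, |g k u| ≤ ∑ k : Fin N, (β + if k = j then γ else 0) :=
      Finset.sum_le_sum fun k _ => hinit k
    refine h1.trans (le_of_eq ?_)
    rw [Finset.sum_add_distrib, Finset.sum_const, Finset.sum_ite_eq' Finset.univ j
      (fun _ => γ)]
    simp [Finset.card_univ, mul_comm]
  have hSbd : ∀ t ∈ Set.Icc u T, ∑ k, |g k t| ≤ ((N:ℝ)*β+γ) * Real.exp (2*L*T) := by
    have key : ∀ t ∈ Set.Icc u T, (fun t => ∑ k, |g k t|) t
        ≤ ((N:ℝ)*β+γ) + ∫ r in u..t, (2*L) * ∑ k, |g k r| := by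
      intro t ht
      have h1 : ∀ i : Fin N, |g i t| ≤ |g i u|
          + ∫ r in u..t, (L * |g i r| + (L/(N:ℝ)) * ∑ k, |g k r|) := by
        intro i
        have h2 := hstep i u t le_rfl ht.1 ht.2
        have h3 : |g i t| ≤ |g i u| + |g i t - g i u| := by
          have h4 := abs_add_le (g i u) (g i t - g i u)
          simp only [add_sub_cancel] at h4
          exact h4
        linarith
      have h4 : ∑ i, |g i t| ≤ ∑ i : Fin N, (|g i u|
          + ∫ r in u..t, (L * |g i r| + (L/(N:ℝ)) * ∑ k, |g k r|)) :=
        Finset.sum_le_sum fun i _ => h1 i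
      rw [Finset.sum_add_distrib] at h4
      have h5 : (∑ i : Fin N, ∫ r in u..t, (L * |g i r| + (L/(N:ℝ)) * ∑ k, |g k r|))
          = ∫ r in u..t, (2*L) * ∑ k, |g k r| := by
        rw [← intervalIntegral.integral_finset_sum
          (fun i _ => hρint i u t le_rfl ht.1 ht.2)]
        refine intervalIntegral.integral_congr fun r hr => ?_
        rw [Finset.sum_add_distrib, ← Finset.mul_sum, Finset.sum_const,
          Finset.card_univ, Fintype.card_fin, nsmul_eq_mul]
        field_simp
        ring
      rw [h5] at h4
      exact h4.trans (by linarith [hSu])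
    intro t ht
    have h6 := gronwall_int huT (by positivity) (by positivity) hScont hSpos key t ht
    refine h6.trans ?_
    have h7 : Real.exp (2*L*(t-u)) ≤ Real.exp (2*L*T) :=
      Real.exp_le_exp.2 (by nlinarith [ht.2, ht.1, hu0, hL])
    exact mul_le_mul_of_nonneg_left h7 (by positivity)
  have hone : ∀ i, ∀ t ∈ Set.Icc u T,
      |g i t| ≤ CCfun L T * ((N:ℝ)*β+γ) * ((if i = j then 1 else 0) + 1/(N:ℝ)) := by
    intro i t ht
    by_cases hij : i = j
    · have h1 : |g i t| ≤ ∑ k, |g k t| :=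
        Finset.single_le_sum (fun k _ => abs_nonneg (g k t)) (Finset.mem_univ i)
      have h2 := hSbd t ht
      rw [if_pos hij]
      have hCC : Real.exp (2*L*T) ≤ CCfun L T := by
        unfold CCfun
        nlinarith [mul_nonneg (mul_nonneg hL hT.le) e2pos.le]
      have hP : (1:ℝ) ≤ 1 + 1/(N:ℝ) := le_add_of_nonneg_right (by positivity)
      have hCCpos := CCfun_pos hL hT.le
      calc |g i t| ≤ ((N:ℝ)*β+γ) * Real.exp (2*L*T) := h1.trans h2
      _ ≤ ((N:ℝ)*β+γ) * CCfun L T := mul_le_mul_of_nonneg_left hCC hNB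
      _ = CCfun L T * ((N:ℝ)*β+γ) * 1 := by ring
      _ ≤ CCfun L T * ((N:ℝ)*β+γ) * (1 + 1/(N:ℝ)) :=
          mul_le_mul_of_nonneg_left hP (by positivity)
    · have hM1pos : (0:ℝ) ≤ ((N:ℝ)*β+γ) * Real.exp (2*L*T) := by positivity
      have key : ∀ τ ∈ Set.Icc u T, (fun τ => |g i τ|) τ ≤ β + ∫ r in u..τ,
          (L * |g i r| + (L/(N:ℝ)) * (((N:ℝ)*β+γ) * Real.exp (2*L*T))) := by
        intro τ hτ
        have h2 := hstep i u τ le_rfl hτ.1 hτ.2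
        have h3 : |g i τ| ≤ |g i u| + |g i τ - g i u| := by
          have h4 := abs_add_le (g i u) (g i τ - g i u)
          simp only [add_sub_cancel] at h4
          exact h4
        have h4 : |g i u| ≤ β := by
          have := hinit i
          rw [if_neg hij] at this
          linarith
        have h5 : (∫ r in u..τ, (L * |g i r| + (L/(N:ℝ)) * ∑ k, |g k r|))
            ≤ ∫ r in u..τ, (L * |g i r| + (L/(N:ℝ)) * (((N:ℝ)*β+γ) * Real.exp (2*L*T))) := by
          refine intervalIntegral.integral_mono_on hτ.1 (hρint i u τ le_rfl hτ.1 hτ.2)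
            ?_ fun x hx => ?_
          · apply ContinuousOn.intervalIntegrable
            refine ((continuousOn_const.mul (hgc i).abs).add continuousOn_const).mono ?_
            rw [Set.uIcc_of_le hτ.1]
            exact Set.Icc_subset_Icc le_rfl hτ.2
          · have h6 := hSbd x ⟨hx.1, hx.2.trans hτ.2⟩
            have h7 : (0:ℝ) ≤ L/(N:ℝ) := by positivity
            nlinarith [mul_le_mul_of_nonneg_left h6 h7]
        linarith
      have hcont_i : ContinuousOn (fun τ => |g i τ|) (Set.Icc u T) := (hgc i).abs
      have hgron := gronwall_int' huT hβ hL (by positivity)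
        hcont_i (fun τ _ => abs_nonneg _) key t ht
      rw [if_neg hij]
      -- now chain of estimates
      have e1 : Real.exp (L*(T-u)) ≤ Real.exp (L*T) :=
        Real.exp_le_exp.2 (by nlinarith)
      have hab : (N:ℝ)*β + L*(((N:ℝ)*β+γ) * Real.exp (2*L*T))*(T-u)
          ≤ ((N:ℝ)*β+γ) * (1 + L*T*Real.exp (2*L*T)) := by
        have h8 : L*(((N:ℝ)*β+γ) * Real.exp (2*L*T))*(T-u)
            ≤ L*(((N:ℝ)*β+γ) * Real.exp (2*L*T))*T := by
          refine mul_le_mul_of_nonneg_left (by linarith) (by positivity)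
        nlinarith
      have hEpos : (0:ℝ) < Real.exp (L*(T-u)) := Real.exp_pos _
      have h9 : ((N:ℝ)*β + L*(((N:ℝ)*β+γ) * Real.exp (2*L*T))*(T-u)) * Real.exp (L*(T-u))
          ≤ (((N:ℝ)*β+γ) * (1 + L*T*Real.exp (2*L*T))) * Real.exp (L*T) := by
        refine mul_le_mul hab e1 hEpos.le ?_
        nlinarith [mul_nonneg (mul_nonneg hL hT.le) e2pos.le,
          mul_nonneg hNB (mul_nonneg (mul_nonneg hL hT.le) e2pos.le)]
      rw [show ((0:ℝ) + 1/(N:ℝ)) = 1/(N:ℝ) by ring, mul_one_div, le_div_iff₀ hn]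
      calc |g i t| * (N:ℝ)
          ≤ ((β + (L/(N:ℝ)) * (((N:ℝ)*β+γ) * Real.exp (2*L*T)) * (T-u))
              * Real.exp (L*(T-u))) * (N:ℝ) :=
            mul_le_mul_of_nonneg_right hgron hn.le
      _ = ((N:ℝ)*β + L*(((N:ℝ)*β+γ) * Real.exp (2*L*T))*(T-u)) * Real.exp (L*(T-u)) := by
            field_simp
      _ ≤ (((N:ℝ)*β+γ) * (1 + L*T*Real.exp (2*L*T))) * Real.exp (L*T) := h9
      _ ≤ CCfun L T * ((N:ℝ)*β+γ) := by
            unfold CCfun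
            nlinarith
  refine ⟨hone, ?_⟩
  intro i s t hus hst htT
  have hCCpos := CCfun_pos hL hT.le
  have hPpos : (0:ℝ) ≤ (if i = j then (1:ℝ) else 0) + 1/(N:ℝ) := by
    split_ifs <;> positivity
  have hPge : 1/(N:ℝ) ≤ (if i = j then (1:ℝ) else 0) + 1/(N:ℝ) := by
    split_ifs <;> simp
  rw [hgd i s t hus hst htT]
  have hbd : ∀ r ∈ Set.uIoc s t,
      ‖a i r * g i r + (N:ℝ)⁻¹ * ∑ k, c i k r * g k r‖
        ≤ CC2fun L T * ((N:ℝ)*β+γ) * ((if i = j then 1 else 0) + 1/(N:ℝ)) := by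
    intro r hr
    rw [Set.uIoc_of_le hst] at hr
    have hr' : r ∈ Set.Icc u T := ⟨hus.trans hr.1.le, hr.2.trans htT⟩
    rw [Real.norm_eq_abs]
    refine (hFbd i r hr').trans ?_
    have b1 : |g i r| ≤ CCfun L T * ((N:ℝ)*β+γ) * ((if i = j then 1 else 0) + 1/(N:ℝ)) :=
      hone i r hr'
    have b2 := hSbd r hr'
    have b4 : (L/(N:ℝ)) * (∑ k, |g k r|)
        ≤ L * Real.exp (2*L*T) * ((N:ℝ)*β+γ) * ((if i = j then 1 else 0) + 1/(N:ℝ)) := by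
      have p1 : (0:ℝ) ≤ L/(N:ℝ) := div_nonneg hL hn.le
      have p2 : (0:ℝ) ≤ L * Real.exp (2*L*T) * ((N:ℝ)*β+γ) :=
        mul_nonneg (mul_nonneg hL e2pos.le) hNB
      calc (L/(N:ℝ)) * (∑ k, |g k r|) ≤ (L/(N:ℝ)) * (((N:ℝ)*β+γ) * Real.exp (2*L*T)) :=
            mul_le_mul_of_nonneg_left b2 p1
      _ = (L * Real.exp (2*L*T) * ((N:ℝ)*β+γ)) * (1/(N:ℝ)) := by ring
      _ ≤ (L * Real.exp (2*L*T) * ((N:ℝ)*β+γ))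
            * ((if i = j then 1 else 0) + 1/(N:ℝ)) :=
            mul_le_mul_of_nonneg_left hPge p2
      _ = L * Real.exp (2*L*T) * ((N:ℝ)*β+γ) * ((if i = j then 1 else 0) + 1/(N:ℝ)) := by
            ring
    have b5 : L * |g i r| ≤ L * (CCfun L T * ((N:ℝ)*β+γ)
        * ((if i = j then 1 else 0) + 1/(N:ℝ))) := mul_le_mul_of_nonneg_left b1 hL
    have brw : L * (CCfun L T * ((N:ℝ)*β+γ) * ((if i = j then 1 else 0) + 1/(N:ℝ)))
        + L * Real.exp (2*L*T) * ((N:ℝ)*β+γ) * ((if i = j then 1 else 0) + 1/(N:ℝ))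
        = CC2fun L T * ((N:ℝ)*β+γ) * ((if i = j then 1 else 0) + 1/(N:ℝ)) := by
      unfold CC2fun
      ring
    linarith
  have hnorm := intervalIntegral.norm_integral_le_of_norm_le_const hbd
  rw [Real.norm_eq_abs, abs_of_nonneg (sub_nonneg.2 hst)] at hnorm
  calc |∫ r in s..t, (a i r * g i r + (N:ℝ)⁻¹ * ∑ k, c i k r * g k r)|
      ≤ CC2fun L T * ((N:ℝ)*β+γ) * ((if i = j then 1 else 0) + 1/(N:ℝ)) * (t - s) := hnorm
  _ = CC2fun L T * ((N:ℝ)*β+γ) * (t-s) * ((if i = j then 1 else 0) + 1/(N:ℝ)) := by ring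

lemma minmax_aux {T x : ℝ} (hx : 0 ≤ x) (hxT : x ≤ T) : x ≤ max 1 T * min 1 x := by
  rcases le_total x 1 with h | h
  · rw [min_eq_right h]
    exact le_mul_of_one_le_left hx (le_max_left 1 T)
  · rw [min_eq_left h]
    rw [mul_one]
    exact hxT.trans (le_max_right 1 T)

set_option maxHeartbeats 1000000 in
/-- regularity in both variables of the solutions `d_u^i(t)` of the family of
linear Volterra systems characterizing `D_u^j X^{i,N}_t` for the interacting particle system.
The constant `C` depends only on `σ`, `L`, `T`. -/
theorem statement5 (T σ L : ℝ) (hT : 0 < T) (hσ : 0 < σ) (hL : 0 ≤ L) :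
    ∃ C : ℝ,
      ∀ (N : ℕ), 0 < N → ∀ (j : Fin N)
        (a : Fin N → ℝ → ℝ) (c : Fin N → Fin N → ℝ → ℝ),
        (∀ i, Measurable (a i)) →
        (∀ i k, Measurable (c i k)) →
        (∀ i, ∀ r ∈ Set.Icc (0 : ℝ) T, |a i r| ≤ L) →
        (∀ i k, ∀ r ∈ Set.Icc (0 : ℝ) T, |c i k r| ≤ L) →
        ∀ (d : ℝ → Fin N → ℝ → ℝ),
        (∀ u ∈ Set.Icc (0 : ℝ) T, ∀ i, ContinuousOn (d u i) (Set.Icc u T)) →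
        (∀ u ∈ Set.Icc (0 : ℝ) T, ∀ i, ∀ t ∈ Set.Icc u T,
          d u i t = (if i = j then σ else 0)
            + ∫ r in u..t, (a i r * d u i r + (N : ℝ)⁻¹ * ∑ k, c i k r * d u k r)) →
        ∀ i : Fin N, ∀ v u s t : ℝ, 0 ≤ v → v ≤ u → u ≤ s → s ≤ t → t ≤ T →
          |d u i t - d v i t|
              ≤ C * |u - v| * ((if i = j then 1 else 0) + 1 / N) ∧
          |d u i t - d u i s|
              ≤ C * |t - s| * ((if i = j then 1 else 0) + 1 / N) ∧
          |d u i t - d v i t - d u i s + d v i s|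
              ≤ C * (min 1 |u - v|) * (min 1 |t - s|) * ((if i = j then 1 else 0) + 1 / N) := by

  refine ⟨σ * (CC2fun L T + 2 * CCfun L T * CC2fun L T + 2 * CC2fun L T * CC2fun L T)
    * (max 1 T)^2, ?_⟩
  intro N hN j a c ha hc haL hcL d hcont heqd i v u s t hv0 hvu hus hst htT
  have hCCpos : 0 < CCfun L T := CCfun_pos hL hT.le
  have hCC2pos : 0 ≤ CC2fun L T := CC2fun_nonneg hL hT.le
  have hn : (0:ℝ) < (N:ℝ) := Nat.cast_pos.2 hN
  have hu0 : 0 ≤ u := hv0.trans hvu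
  have huT : u ≤ T := (hus.trans hst).trans htT
  have hvT : v ≤ T := hvu.trans huT
  have huI : u ∈ Set.Icc (0:ℝ) T := ⟨hu0, huT⟩
  have hvI : v ∈ Set.Icc (0:ℝ) T := ⟨hv0, hvT⟩
  have huv0 : 0 ≤ u - v := sub_nonneg.2 hvu
  have hts0 : 0 ≤ t - s := sub_nonneg.2 hst
  have hmax : (1:ℝ) ≤ max 1 T := le_max_left _ _
  have hmaxsq : (1:ℝ) ≤ (max 1 T)^2 := by nlinarith
  have hPpos : (0:ℝ) ≤ (if i = j then (1:ℝ) else 0) + 1/(N:ℝ) := by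
    split_ifs <;> positivity
  have hK0 : (0:ℝ) ≤ CC2fun L T + 2 * CCfun L T * CC2fun L T
      + 2 * CC2fun L T * CC2fun L T := by positivity
  -- initial values
  have hd0 : ∀ w ∈ Set.Icc (0:ℝ) T, ∀ i', d w i' w = (if i' = j then σ else 0) := by
    intro w hw i'
    rw [heqd w hw i' w ⟨le_rfl, hw.2⟩, intervalIntegral.integral_same, add_zero]
  have heq' : ∀ w ∈ Set.Icc (0:ℝ) T, ∀ i', ∀ τ ∈ Set.Icc w T,
      d w i' τ = d w i' w + ∫ r in w..τ,
        (a i' r * d w i' r + (N:ℝ)⁻¹ * ∑ k, c i' k r * d w k r) := by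
    intro w hw i' τ hτ
    rw [heqd w hw i' τ hτ, hd0 w hw i']
  have hinitw : ∀ w ∈ Set.Icc (0:ℝ) T, ∀ i',
      |d w i' w| ≤ 0 + (if i' = j then σ else 0) := by
    intro w hw i'
    rw [hd0 w hw i', zero_add]
    split_ifs
    · rw [abs_of_nonneg hσ.le]
    · simp
  obtain ⟨bndU, incU⟩ := core_volterra hT hL hN j ha hc haL hcL huI (hcont u huI)
    (heq' u huI) le_rfl hσ.le (hinitw u huI)
  obtain ⟨bndV, incV⟩ := core_volterra hT hL hN j ha hc haL hcL hvI (hcont v hvI)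
    (heq' v hvI) le_rfl hσ.le (hinitw v hvI)
  simp only [mul_zero, zero_add] at bndU incU bndV incV
  -- difference process
  set e : Fin N → ℝ → ℝ := fun i' τ => d u i' τ - d v i' τ with he
  have hecont : ∀ i', ContinuousOn (e i') (Set.Icc u T) := fun i' =>
    (hcont u huI i').sub ((hcont v hvI i').mono (Set.Icc_subset_Icc hvu le_rfl))
  have hFintw : ∀ w ∈ Set.Icc (0:ℝ) T, ∀ (i' : Fin N), ∀ s' t' : ℝ,
      s' ∈ Set.Icc w T → t' ∈ Set.Icc w T →
      IntervalIntegrable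
        (fun r => a i' r * d w i' r + (N:ℝ)⁻¹ * ∑ k, c i' k r * d w k r) volume s' t' :=
    fun w hw i' s' t' hs' ht' =>
      integrand_intble ha hc haL hcL hL hw.1 (hcont w hw) i' hs' ht'
  have heqe : ∀ i', ∀ τ ∈ Set.Icc u T, e i' τ = e i' u
      + ∫ r in u..τ, (a i' r * e i' r + (N:ℝ)⁻¹ * ∑ k, c i' k r * e k r) := by
    intro i' τ hτ
    have hτv : τ ∈ Set.Icc v T := ⟨hvu.trans hτ.1, hτ.2⟩
    have huv : u ∈ Set.Icc v T := ⟨hvu, huT⟩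
    have h1 := heq' u huI i' τ hτ
    have h2 : d v i' τ - d v i' u = ∫ r in u..τ,
        (a i' r * d v i' r + (N:ℝ)⁻¹ * ∑ k, c i' k r * d v k r) := by
      rw [heq' v hvI i' τ hτv, heq' v hvI i' u huv]
      have h3 := intervalIntegral.integral_interval_sub_left
        (hFintw v hvI i' v τ ⟨le_rfl, hvT⟩ hτv) (hFintw v hvI i' v u ⟨le_rfl, hvT⟩ huv)
      linarith [h3]
    have hFu := hFintw u huI i' u τ ⟨le_rfl, huT⟩ hτ
    have hFv := hFintw v hvI i' u τ huv hτv
    have h6 : e i' τ = e i' u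
        + ((∫ r in u..τ, (a i' r * d u i' r + (N:ℝ)⁻¹ * ∑ k, c i' k r * d u k r))
          - ∫ r in u..τ, (a i' r * d v i' r + (N:ℝ)⁻¹ * ∑ k, c i' k r * d v k r)) := by
      simp only [he]
      linarith [h1, h2]
    rw [h6, ← intervalIntegral.integral_sub hFu hFv]
    congr 1
    refine intervalIntegral.integral_congr fun r _ => ?_
    simp only [he, mul_sub]
    rw [Finset.sum_sub_distrib]
    ring
  have hinite : ∀ i', |e i' u| ≤ CC2fun L T * σ * (u - v)/(N:ℝ)
      + (if i' = j then CC2fun L T * σ * (u-v) else 0) := by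
    intro i'
    have h1 : e i' u = d v i' v - d v i' u := by
      simp only [he]
      rw [hd0 u huI i', ← hd0 v hvI i']
    rw [h1, abs_sub_comm]
    refine (incV i' v u le_rfl hvu huT).trans ?_
    split_ifs
    · refine le_of_eq ?_
      field_simp
      ring
    · refine le_of_eq ?_
      field_simp
      ring
  have hβe : 0 ≤ CC2fun L T * σ * (u-v)/(N:ℝ) :=
    div_nonneg (mul_nonneg (mul_nonneg hCC2pos hσ.le) huv0) hn.le
  have hγe : 0 ≤ CC2fun L T * σ * (u-v) :=
    mul_nonneg (mul_nonneg hCC2pos hσ.le) huv0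
  obtain ⟨bndE, incE⟩ := core_volterra hT hL hN j ha hc haL hcL huI hecont heqe
    hβe hγe hinite
  have hNBe : (N:ℝ) * (CC2fun L T * σ * (u-v)/(N:ℝ)) + CC2fun L T * σ * (u-v)
      = 2*(CC2fun L T * σ * (u-v)) := by
    field_simp
    ring
  rw [hNBe] at bndE incE
  have htI : t ∈ Set.Icc u T := ⟨hus.trans hst, htT⟩
  refine ⟨?_, ?_, ?_⟩
  · -- claim 1
    have c1 := bndE i t htI
    have hC1 : 2 * CCfun L T * CC2fun L T * σ
        ≤ σ * (CC2fun L T + 2 * CCfun L T * CC2fun L T + 2 * CC2fun L T * CC2fun L T)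
          * (max 1 T)^2 := by
      nlinarith [mul_nonneg (mul_nonneg hCCpos.le hCC2pos) hσ.le,
        mul_nonneg hK0 hσ.le, mul_nonneg (mul_nonneg hK0 hσ.le) (by nlinarith : (0:ℝ) ≤ (max 1 T)^2 - 1)]
    rw [show |u - v| = u - v from abs_of_nonneg huv0]
    have h7 : |e i t| = |d u i t - d v i t| := by simp only [he]
    rw [← h7]
    calc |e i t| ≤ CCfun L T * (2*(CC2fun L T * σ * (u-v)))
        * ((if i = j then 1 else 0) + 1/(N:ℝ)) := c1
    _ = (2 * CCfun L T * CC2fun L T * σ)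
        * ((u-v) * ((if i = j then 1 else 0) + 1/(N:ℝ))) := by ring
    _ ≤ (σ * (CC2fun L T + 2 * CCfun L T * CC2fun L T + 2 * CC2fun L T * CC2fun L T)
          * (max 1 T)^2) * ((u-v) * ((if i = j then 1 else 0) + 1/(N:ℝ))) :=
        mul_le_mul_of_nonneg_right hC1 (mul_nonneg huv0 hPpos)
    _ = σ * (CC2fun L T + 2 * CCfun L T * CC2fun L T + 2 * CC2fun L T * CC2fun L T)
          * (max 1 T)^2 * (u-v) * ((if i = j then 1 else 0) + 1/(N:ℝ)) := by ring
  · -- claim 2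
    have c2 := incU i s t hus hst htT
    have hC2 : CC2fun L T * σ
        ≤ σ * (CC2fun L T + 2 * CCfun L T * CC2fun L T + 2 * CC2fun L T * CC2fun L T)
          * (max 1 T)^2 := by
      nlinarith [mul_nonneg (mul_nonneg hCCpos.le hCC2pos) hσ.le,
        mul_nonneg hK0 hσ.le, mul_nonneg (mul_nonneg hK0 hσ.le) (by nlinarith : (0:ℝ) ≤ (max 1 T)^2 - 1)]
    rw [show |t - s| = t - s from abs_of_nonneg hts0]
    calc |d u i t - d u i s| ≤ CC2fun L T * σ * (t - s)
        * ((if i = j then 1 else 0) + 1/(N:ℝ)) := c2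
    _ = (CC2fun L T * σ) * ((t-s) * ((if i = j then 1 else 0) + 1/(N:ℝ))) := by ring
    _ ≤ (σ * (CC2fun L T + 2 * CCfun L T * CC2fun L T + 2 * CC2fun L T * CC2fun L T)
          * (max 1 T)^2) * ((t-s) * ((if i = j then 1 else 0) + 1/(N:ℝ))) :=
        mul_le_mul_of_nonneg_right hC2 (mul_nonneg hts0 hPpos)
    _ = σ * (CC2fun L T + 2 * CCfun L T * CC2fun L T + 2 * CC2fun L T * CC2fun L T)
          * (max 1 T)^2 * (t-s) * ((if i = j then 1 else 0) + 1/(N:ℝ)) := by ring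
  · -- claim 3
    have c3 := incE i s t hus hst htT
    have hrw : d u i t - d v i t - d u i s + d v i s = e i t - e i s := by
      simp only [he]
      ring
    rw [hrw, show |u - v| = u - v from abs_of_nonneg huv0,
      show |t - s| = t - s from abs_of_nonneg hts0]
    have m1 : u - v ≤ max 1 T * min 1 (u-v) := minmax_aux huv0 (by linarith)
    have m2 : t - s ≤ max 1 T * min 1 (t-s) := minmax_aux hts0 (by linarith)
    have mn1 : 0 ≤ min 1 (u-v) := le_min zero_le_one huv0
    have mn2 : 0 ≤ min 1 (t-s) := le_min zero_le_one hts0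
    have hC3 : 2 * CC2fun L T * CC2fun L T * σ * (max 1 T)^2
        ≤ σ * (CC2fun L T + 2 * CCfun L T * CC2fun L T + 2 * CC2fun L T * CC2fun L T)
          * (max 1 T)^2 := by
      nlinarith [mul_nonneg (mul_nonneg hCCpos.le hCC2pos) hσ.le,
        mul_nonneg hCC2pos hσ.le,
        mul_nonneg (mul_nonneg (mul_nonneg hCCpos.le hCC2pos) hσ.le) (by nlinarith : (0:ℝ) ≤ (max 1 T)^2),
        mul_nonneg (mul_nonneg hCC2pos hσ.le) (by nlinarith : (0:ℝ) ≤ (max 1 T)^2)]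
    calc |e i t - e i s| ≤ CC2fun L T * (2*(CC2fun L T * σ * (u-v))) * (t-s)
        * ((if i = j then 1 else 0) + 1/(N:ℝ)) := c3
    _ = (2 * CC2fun L T * CC2fun L T * σ) * ((u-v)*(t-s))
        * ((if i = j then 1 else 0) + 1/(N:ℝ)) := by ring
    _ ≤ (2 * CC2fun L T * CC2fun L T * σ)
        * ((max 1 T * min 1 (u-v)) * (max 1 T * min 1 (t-s)))
        * ((if i = j then 1 else 0) + 1/(N:ℝ)) := by
        refine mul_le_mul_of_nonneg_right (mul_le_mul_of_nonneg_left
          (mul_le_mul m1 m2 hts0 (mul_nonneg (zero_le_one.trans hmax) mn1)) ?_) hPpos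
        exact mul_nonneg (mul_nonneg (mul_nonneg (by norm_num) hCC2pos) hCC2pos) hσ.le
    _ = (2 * CC2fun L T * CC2fun L T * σ * (max 1 T)^2)
        * ((min 1 (u-v) * min 1 (t-s)) * ((if i = j then 1 else 0) + 1/(N:ℝ))) := by ring
    _ ≤ (σ * (CC2fun L T + 2 * CCfun L T * CC2fun L T + 2 * CC2fun L T * CC2fun L T)
          * (max 1 T)^2)
        * ((min 1 (u-v) * min 1 (t-s)) * ((if i = j then 1 else 0) + 1/(N:ℝ))) :=
        mul_le_mul_of_nonneg_right hC3 (mul_nonneg (mul_nonneg mn1 mn2) hPpos)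
    _ = σ * (CC2fun L T + 2 * CCfun L T * CC2fun L T + 2 * CC2fun L T * CC2fun L T)
          * (max 1 T)^2 * min 1 (u-v) * min 1 (t-s)
          * ((if i = j then 1 else 0) + 1/(N:ℝ)) := by ring
end

section
/- Fix N ∈ ℕ, j ∈ {1,…,N}, T > 0, L ≥ 0, and measurable a^i, c^{i,k} : [0,T] → ℝ with |a^i(r)| ≤ L and |c^{i,k}(r)| ≤ L for all i,k,r. (1) If p¹,…,p^N : [0,T] → ℝ are continuous with p^i(t) = 1_{i=j} + ∫₀ᵗ ( a^i(r) p^i(r) + N^{−1} ∑_{k=1}^N c^{i,k}(r) p^k(r) ) dr, then there is C = C(L,T) such that |p^i(t)| ≤ C(1_{i=j} + 1/N) for all i and t. (2) If furthermore q¹,…,q^N : [0,T] → ℝ are continuous with q^i(t) = ∫₀ᵗ ( F^i(r) + a^i(r) q^i(r) + N^{−1} ∑_{k=1}^N c^{i,k}(r) q^k(r) ) dr, where the F^i are measurable and satisfy |F^i(r)| ≤ L(|p^i(r)| + N^{−1}∑_{k=1}^N |p^k(r)|)², then there is C' = C'(L,T) such that |q^i(t)| ≤ C'(1_{i=j} +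 1/N) for all i and t. -/
open MeasureTheory

open Set intervalIntegral

/-- Integral form of Gronwall's inequality for continuous nonnegative functions. -/
lemma gronwall_int_s12 {f : ℝ → ℝ} {A B T : ℝ} (hA : 0 ≤ A) (hB : 0 ≤ B)
    (hf : Continuous f) (hf0 : ∀ t, 0 ≤ f t)
    (h : ∀ t ∈ Icc (0:ℝ) T, f t ≤ A + B * ∫ r in (0:ℝ)..t, f r) :
    ∀ t ∈ Icc (0:ℝ) T, f t ≤ A * Real.exp (B * T) := by
  set G : ℝ → ℝ := fun t => A + B * ∫ r in (0:ℝ)..t, f r with hGdef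
  have hGc : Continuous G :=
    continuous_const.add (continuous_const.mul
      (intervalIntegral.continuous_primitive (fun a b => hf.intervalIntegrable a b) 0))
  have hGd : ∀ x : ℝ, HasDerivAt G (B * f x) x := by
    intro x
    have h1 : HasDerivAt (fun t => ∫ r in (0:ℝ)..t, f r) (f x) x :=
      intervalIntegral.integral_hasDerivAt_right (hf.intervalIntegrable 0 x)
        (hf.stronglyMeasurable.stronglyMeasurableAtFilter) hf.continuousAt
    exact (h1.const_mul B).const_add A
  have key := norm_le_gronwallBound_of_norm_deriv_right_le (f := G)
      (f' := fun x => B * f x) (δ := A) (K := B) (ε := 0) (a := 0) (b := T)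
      hGc.continuousOn (fun x _ => (hGd x).hasDerivWithinAt)
      (by simp [hGdef, abs_of_nonneg hA])
      (fun x hx => by
        have hfg : f x ≤ G x := h x ⟨hx.1, hx.2.le⟩
        have : ‖B * f x‖ = B * f x := by
          rw [Real.norm_eq_abs, abs_of_nonneg (mul_nonneg hB (hf0 x))]
        rw [this, add_zero]
        calc B * f x ≤ B * G x := mul_le_mul_of_nonneg_left hfg hB
          _ ≤ B * ‖G x‖ := mul_le_mul_of_nonneg_left (le_abs_self _) hB)
  intro t ht
  have h1 : f t ≤ G t := h t ht
  have h2 : ‖G t‖ ≤ gronwallBound A B 0 (t - 0) := key t ht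
  rw [gronwallBound_ε0, sub_zero] at h2
  calc f t ≤ G t := h1
    _ ≤ ‖G t‖ := le_abs_self _
    _ ≤ A * Real.exp (B * t) := h2
    _ ≤ A * Real.exp (B * T) := by
        apply mul_le_mul_of_nonneg_left _ hA
        exact Real.exp_le_exp.2 (mul_le_mul_of_nonneg_left ht.2 hB)

/-- Key estimate for the linear Volterra system with source term. -/
lemma key_sys {N : ℕ} (hN : 0 < N) {L T : ℝ} (hL : 0 ≤ L) (hT : 0 ≤ T)
    (a : Fin N → ℝ → ℝ) (c : Fin N → Fin N → ℝ → ℝ) (G : Fin N → ℝ → ℝ)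
    (u0 g : Fin N → ℝ) (u : Fin N → ℝ → ℝ)
    (haB : ∀ i, ∀ r ∈ Icc (0:ℝ) T, |a i r| ≤ L)
    (hcB : ∀ i k, ∀ r ∈ Icc (0:ℝ) T, |c i k r| ≤ L)
    (hgB : ∀ i, ∀ r ∈ Icc (0:ℝ) T, |G i r| ≤ g i) (hg0 : ∀ i, 0 ≤ g i)
    (hu : ∀ i, ContinuousOn (u i) (Icc 0 T))
    (heq : ∀ i, ∀ t ∈ Icc (0:ℝ) T, u i t = u0 i + ∫ r in (0:ℝ)..t,
      (G i r + a i r * u i r + (N:ℝ)⁻¹ * ∑ k, c i k r * u k r)) :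
    ∀ i, ∀ t ∈ Icc (0:ℝ) T, |u i t| ≤
      (|u0 i| + T * g i
        + L * T * (((∑ k, |u0 k|) + T * ∑ k, g k) * Real.exp (2*L*T)) * (N:ℝ)⁻¹)
      * Real.exp (L*T) := by
  have hNne : (N:ℝ) ≠ 0 := Nat.cast_ne_zero.2 hN.ne'
  have hNinv : (0:ℝ) ≤ (N:ℝ)⁻¹ := by positivity
  -- clamp to [0,T]
  set π : ℝ → ℝ := fun t => max 0 (min t T) with hπdef
  have hπc : Continuous π := continuous_const.max (continuous_id.min continuous_const)
  have hπmem : ∀ t, π t ∈ Icc (0:ℝ) T := fun t => ⟨le_max_left _ _, max_le hT (min_le_right _ _)⟩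
  have hπid : ∀ t ∈ Icc (0:ℝ) T, π t = t := fun t ht => by
    simp only [hπdef]; rw [min_eq_left ht.2, max_eq_right ht.1]
  set U : Fin N → ℝ → ℝ := fun i t => u i (π t) with hUdef
  have hUc : ∀ i, Continuous (U i) := fun i => (hu i).comp_continuous hπc hπmem
  have hUeq : ∀ i, ∀ t ∈ Icc (0:ℝ) T, U i t = u i t := fun i t ht => by
    simp only [hUdef]; rw [hπid t ht]
  set S : ℝ → ℝ := fun t => ∑ k, |U k t| with hSdef
  have hSc : Continuous S := continuous_finset_sum _ fun k _ => (hUc k).abs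
  have hS0 : ∀ t, 0 ≤ S t := fun t => Finset.sum_nonneg fun k _ => abs_nonneg _
  set H : Fin N → ℝ → ℝ := fun i r =>
    G i r + a i r * U i r + (N:ℝ)⁻¹ * ∑ k, c i k r * U k r with hHdef
  set B : Fin N → ℝ → ℝ := fun i r => g i + L * |U i r| + L * (N:ℝ)⁻¹ * S r with hBdef
  have hBc : ∀ i, Continuous (B i) :=
    fun i => (continuous_const.add (continuous_const.mul (hUc i).abs)).add
      (continuous_const.mul hSc)
  have hB0 : ∀ i r, 0 ≤ B i r := fun i r =>
    add_nonneg (add_nonneg (hg0 i) (mul_nonneg hL (abs_nonneg _)))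
      (mul_nonneg (mul_nonneg hL hNinv) (hS0 r))
  have hbound : ∀ i, ∀ r ∈ Icc (0:ℝ) T, |H i r| ≤ B i r := by
    intro i r hr
    have h1 : |H i r| ≤ |G i r| + |a i r * U i r| + |(N:ℝ)⁻¹ * ∑ k, c i k r * U k r| :=
      (abs_add_le _ _).trans (add_le_add (abs_add_le _ _) le_rfl)
    have h2 : |a i r * U i r| ≤ L * |U i r| := by
      rw [abs_mul]; exact mul_le_mul_of_nonneg_right (haB i r hr) (abs_nonneg _)
    have h3 : |(N:ℝ)⁻¹ * ∑ k, c i k r * U k r| ≤ L * (N:ℝ)⁻¹ * S r := by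
      rw [abs_mul, abs_of_nonneg hNinv]
      have h4 : |∑ k, c i k r * U k r| ≤ L * S r := by
        calc |∑ k, c i k r * U k r| ≤ ∑ k, |c i k r * U k r| :=
              Finset.abs_sum_le_sum_abs _ _
          _ ≤ ∑ k, L * |U k r| := Finset.sum_le_sum fun k _ => by
              rw [abs_mul]
              exact mul_le_mul_of_nonneg_right (hcB i k r hr) (abs_nonneg _)
          _ = L * S r := by rw [hSdef, Finset.mul_sum]
      calc (N:ℝ)⁻¹ * |∑ k, c i k r * U k r| ≤ (N:ℝ)⁻¹ * (L * S r) :=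
            mul_le_mul_of_nonneg_left h4 hNinv
        _ = L * (N:ℝ)⁻¹ * S r := by ring
    calc |H i r| ≤ |G i r| + |a i r * U i r| + |(N:ℝ)⁻¹ * ∑ k, c i k r * U k r| := h1
      _ ≤ g i + L * |U i r| + L * (N:ℝ)⁻¹ * S r :=
          add_le_add (add_le_add (hgB i r hr) h2) h3
  -- rewrite the equation in terms of U
  have heqU : ∀ i, ∀ t ∈ Icc (0:ℝ) T, U i t = u0 i + ∫ r in (0:ℝ)..t, H i r := by
    intro i t ht
    rw [hUeq i t ht, heq i t ht]
    congr 1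
    apply intervalIntegral.integral_congr
    intro r hr
    rw [Set.uIcc_of_le ht.1] at hr
    have hr' : r ∈ Icc (0:ℝ) T := ⟨hr.1, hr.2.trans ht.2⟩
    have huU : ∀ k, U k r = u k r := fun k => hUeq k r hr'
    simp only [hHdef, huU]
  -- step A
  have hA : ∀ i, ∀ t ∈ Icc (0:ℝ) T, |U i t| ≤ |u0 i| + ∫ r in (0:ℝ)..t, B i r := by
    intro i t ht
    rw [heqU i t ht]
    have h1 : |∫ r in (0:ℝ)..t, H i r| ≤ |∫ r in (0:ℝ)..t, B i r| := by
      rw [← Real.norm_eq_abs (∫ r in (0:ℝ)..t, H i r)]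
      apply intervalIntegral.norm_integral_le_abs_of_norm_le
      · filter_upwards [ae_restrict_mem measurableSet_uIoc] with r hr
        rw [Set.uIoc_of_le ht.1] at hr
        exact (Real.norm_eq_abs _) ▸ hbound i r ⟨hr.1.le, hr.2.trans ht.2⟩
      · exact (hBc i).intervalIntegrable 0 t
    have h2 : |∫ r in (0:ℝ)..t, B i r| = ∫ r in (0:ℝ)..t, B i r :=
      abs_of_nonneg (intervalIntegral.integral_nonneg ht.1 fun r _ => hB0 i r)
    calc |u0 i + ∫ r in (0:ℝ)..t, H i r| ≤ |u0 i| + |∫ r in (0:ℝ)..t, H i r| := abs_add_le _ _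
      _ ≤ |u0 i| + ∫ r in (0:ℝ)..t, B i r := by rw [← h2]; exact add_le_add (le_refl _) h1
  set A0 : ℝ := ∑ k, |u0 k| with hA0def
  set Γ : ℝ := ∑ k, g k with hΓdef
  have hA0nn : 0 ≤ A0 := Finset.sum_nonneg fun k _ => abs_nonneg _
  have hΓnn : 0 ≤ Γ := Finset.sum_nonneg fun k _ => hg0 k
  -- step B: bound on S
  have hSineq : ∀ t ∈ Icc (0:ℝ) T, S t ≤ (A0 + T * Γ) + (2*L) * ∫ r in (0:ℝ)..t, S r := by
    intro t ht
    have hsum : S t ≤ A0 + ∑ i, ∫ r in (0:ℝ)..t, B i r := by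
      calc S t = ∑ i, |U i t| := rfl
        _ ≤ ∑ i, (|u0 i| + ∫ r in (0:ℝ)..t, B i r) :=
            Finset.sum_le_sum fun i _ => hA i t ht
        _ = A0 + ∑ i, ∫ r in (0:ℝ)..t, B i r := by rw [Finset.sum_add_distrib]
    have hsum2 : ∑ i, ∫ r in (0:ℝ)..t, B i r
        = ∫ r in (0:ℝ)..t, (Γ + (2*L) * S r) := by
      rw [← intervalIntegral.integral_finset_sum fun i _ => (hBc i).intervalIntegrable 0 t]
      apply intervalIntegral.integral_congr
      intro r _
      show ∑ i, B i r = Γ + (2*L) * S r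
      simp only [hBdef, hΓdef, hSdef, Finset.sum_add_distrib, ← Finset.mul_sum,
        Finset.sum_const, Finset.card_univ, Fintype.card_fin, nsmul_eq_mul]
      field_simp
      ring
    have hint : ∫ r in (0:ℝ)..t, (Γ + (2*L) * S r)
        = Γ * t + (2*L) * ∫ r in (0:ℝ)..t, S r := by
      rw [intervalIntegral.integral_add (intervalIntegrable_const)
        ((hSc.intervalIntegrable 0 t).const_mul (2*L)),
        intervalIntegral.integral_const, intervalIntegral.integral_const_mul]
      simp [mul_comm]
    have hΓt : Γ * t ≤ T * Γ := by
      rw [mul_comm]; exact mul_le_mul_of_nonneg_right ht.2 hΓnn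
    calc S t ≤ A0 + ∑ i, ∫ r in (0:ℝ)..t, B i r := hsum
      _ = A0 + (Γ * t + (2*L) * ∫ r in (0:ℝ)..t, S r) := by rw [hsum2, hint]
      _ ≤ (A0 + T * Γ) + (2*L) * ∫ r in (0:ℝ)..t, S r := by linarith
  have hSbd := gronwall_int_s12 (add_nonneg hA0nn (mul_nonneg hT hΓnn))
    (by linarith : (0:ℝ) ≤ 2*L) hSc hS0 hSineq
  set D : ℝ := (A0 + T * Γ) * Real.exp (2*L*T) with hDdef
  have hD0 : 0 ≤ D := mul_nonneg (add_nonneg hA0nn (mul_nonneg hT hΓnn)) (Real.exp_nonneg _)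
  have hSbd' : ∀ t ∈ Icc (0:ℝ) T, S t ≤ D := hSbd
  -- step C
  intro i t ht
  have hC : ∀ s ∈ Icc (0:ℝ) T, |U i s| ≤ (|u0 i| + T * g i + L * T * D * (N:ℝ)⁻¹)
      + L * ∫ r in (0:ℝ)..s, |U i r| := by
    intro s hs
    refine (hA i s hs).trans ?_
    have h1 : ∫ r in (0:ℝ)..s, B i r
        ≤ ∫ r in (0:ℝ)..s, ((g i + L * (N:ℝ)⁻¹ * D) + L * |U i r|) := by
      apply intervalIntegral.integral_mono_on hs.1 ((hBc i).intervalIntegrable 0 s)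
        ((continuous_const.add (continuous_const.mul (hUc i).abs)).intervalIntegrable 0 s)
      intro r hr
      have hSr : S r ≤ D := hSbd' r ⟨hr.1, hr.2.trans hs.2⟩
      have : L * (N:ℝ)⁻¹ * S r ≤ L * (N:ℝ)⁻¹ * D :=
        mul_le_mul_of_nonneg_left hSr (mul_nonneg hL hNinv)
      simp only [hBdef, Pi.add_apply, Pi.mul_apply]; linarith
    have h2 : ∫ r in (0:ℝ)..s, ((g i + L * (N:ℝ)⁻¹ * D) + L * |U i r|)
        = (g i + L * (N:ℝ)⁻¹ * D) * s + L * ∫ r in (0:ℝ)..s, |U i r| := by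
      rw [intervalIntegral.integral_add (intervalIntegrable_const)
        (((hUc i).abs.intervalIntegrable 0 s).const_mul L),
        intervalIntegral.integral_const, intervalIntegral.integral_const_mul]
      simp [mul_comm]
    have h3 : (g i + L * (N:ℝ)⁻¹ * D) * s ≤ (g i + L * (N:ℝ)⁻¹ * D) * T :=
      mul_le_mul_of_nonneg_left hs.2
        (add_nonneg (hg0 i) (mul_nonneg (mul_nonneg hL hNinv) hD0))
    have h4 : (g i + L * (N:ℝ)⁻¹ * D) * T = T * g i + L * T * D * (N:ℝ)⁻¹ := by ring
    calc |u0 i| + ∫ r in (0:ℝ)..s, B i r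
        ≤ |u0 i| + ((g i + L * (N:ℝ)⁻¹ * D) * s + L * ∫ r in (0:ℝ)..s, |U i r|) := by
          rw [← h2]; exact add_le_add (le_refl _) h1
      _ ≤ (|u0 i| + T * g i + L * T * D * (N:ℝ)⁻¹) + L * ∫ r in (0:ℝ)..s, |U i r| := by
          linarith [h3]
  have hfin := gronwall_int_s12 (A := |u0 i| + T * g i + L * T * D * (N:ℝ)⁻¹) (B := L)
    (add_nonneg (add_nonneg (abs_nonneg _) (mul_nonneg hT (hg0 i)))
      (mul_nonneg (mul_nonneg (mul_nonneg hL hT) hD0) hNinv)) hL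
    (hUc i).abs (fun s => abs_nonneg _) hC t ht
  rw [← hUeq i t ht]
  exact hfin

/-- Part 1: bound on the first-derivative system. -/
lemma part1_bound (L T : ℝ) (hL : 0 ≤ L) (hT : 0 ≤ T)
    {N : ℕ} (hN : 0 < N) (j : Fin N)
    (a : Fin N → ℝ → ℝ) (c : Fin N → Fin N → ℝ → ℝ)
    (haB : ∀ i, ∀ r ∈ Icc (0:ℝ) T, |a i r| ≤ L)
    (hcB : ∀ i k, ∀ r ∈ Icc (0:ℝ) T, |c i k r| ≤ L)
    (p : Fin N → ℝ → ℝ)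
    (hpc : ∀ i, ContinuousOn (p i) (Icc 0 T))
    (hpe : ∀ i, ∀ t ∈ Icc (0:ℝ) T,
      p i t = (if i = j then 1 else 0)
        + ∫ r in (0:ℝ)..t, (a i r * p i r + (N:ℝ)⁻¹ * ∑ k, c i k r * p k r)) :
    ∀ i, ∀ t ∈ Icc (0:ℝ) T,
      |p i t| ≤ ((1 + L*T*Real.exp (2*L*T)) * Real.exp (L*T))
        * ((if i = j then 1 else 0) + 1/(N:ℝ)) := by
  have hkey := key_sys hN hL hT a c (fun _ _ => (0:ℝ))
    (fun i => if i = j then (1:ℝ) else 0) (fun _ => (0:ℝ)) p haB hcB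
    (fun i r _ => by simp) (fun i => le_refl 0) hpc
    (fun i t ht => by simp only [zero_add]; exact hpe i t ht)
  intro i t ht
  refine le_trans (hkey i t ht) ?_
  have e1 : |if i = j then (1:ℝ) else 0| = (if i = j then (1:ℝ) else 0) := by
    split <;> norm_num
  have e2 : ∑ k : Fin N, |if k = j then (1:ℝ) else 0| = 1 := by
    have h3 : ∀ k : Fin N, |if k = j then (1:ℝ) else 0| = if k = j then (1:ℝ) else 0 :=
      fun k => by split <;> norm_num
    simp only [h3, Finset.sum_ite_eq', Finset.mem_univ, if_true]
  rw [e1, e2]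
  simp only [Finset.sum_const_zero, mul_zero, add_zero, one_mul]
  have hE1 : (0:ℝ) < Real.exp (L*T) := Real.exp_pos _
  have hK : (0:ℝ) ≤ L*T*Real.exp (2*L*T) :=
    mul_nonneg (mul_nonneg hL hT) (Real.exp_nonneg _)
  have hε : (0:ℝ) ≤ (N:ℝ)⁻¹ := by positivity
  have hεd : 1/(N:ℝ) = (N:ℝ)⁻¹ := one_div _
  rw [hεd]
  by_cases hij : i = j
  · simp only [hij, if_true]
    nlinarith [mul_nonneg (mul_nonneg hK hε) hE1.le, mul_nonneg hε hE1.le,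
      mul_nonneg hK hE1.le]
  · simp only [hij, if_false]
    nlinarith [mul_nonneg (mul_nonneg hK hε) hE1.le, mul_nonneg hε hE1.le,
      mul_nonneg hK hE1.le]

/-- Lemma 5.5 mechanism: bounds on the first and second derivatives with
respect to the initial condition of particle `j`, formulated as deterministic linear
Volterra-type systems.  The constants depend only on `L` and `T`. -/
theorem statement12 (L T : ℝ) (hL : 0 ≤ L) (hT : 0 ≤ T) :
    (∃ C : ℝ,
      ∀ (N : ℕ), 0 < N → ∀ (j : Fin N)
        (a : Fin N → ℝ → ℝ) (c : Fin N → Fin N → ℝ → ℝ),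
        (∀ i, Measurable (a i)) →
        (∀ i k, Measurable (c i k)) →
        (∀ i, ∀ r ∈ Set.Icc (0 : ℝ) T, |a i r| ≤ L) →
        (∀ i k, ∀ r ∈ Set.Icc (0 : ℝ) T, |c i k r| ≤ L) →
        ∀ (p : Fin N → ℝ → ℝ),
        (∀ i, ContinuousOn (p i) (Set.Icc 0 T)) →
        (∀ i, ∀ t ∈ Set.Icc (0 : ℝ) T,
          p i t = (if i = j then 1 else 0)
            + ∫ r in (0 : ℝ)..t, (a i r * p i r + (N : ℝ)⁻¹ * ∑ k, c i k r * p k r)) →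
        ∀ i, ∀ t ∈ Set.Icc (0 : ℝ) T,
          |p i t| ≤ C * ((if i = j then 1 else 0) + 1 / N))
    ∧ (∃ C' : ℝ,
      ∀ (N : ℕ), 0 < N → ∀ (j : Fin N)
        (a : Fin N → ℝ → ℝ) (c : Fin N → Fin N → ℝ → ℝ),
        (∀ i, Measurable (a i)) →
        (∀ i k, Measurable (c i k)) →
        (∀ i, ∀ r ∈ Set.Icc (0 : ℝ) T, |a i r| ≤ L) →
        (∀ i k, ∀ r ∈ Set.Icc (0 : ℝ) T, |c i k r| ≤ L) →
        ∀ (p : Fin N → ℝ → ℝ),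
        (∀ i, ContinuousOn (p i) (Set.Icc 0 T)) →
        (∀ i, ∀ t ∈ Set.Icc (0 : ℝ) T,
          p i t = (if i = j then 1 else 0)
            + ∫ r in (0 : ℝ)..t, (a i r * p i r + (N : ℝ)⁻¹ * ∑ k, c i k r * p k r)) →
        ∀ (q : Fin N → ℝ → ℝ) (F : Fin N → ℝ → ℝ),
        (∀ i, ContinuousOn (q i) (Set.Icc 0 T)) →
        (∀ i, Measurable (F i)) →
        (∀ i, ∀ r ∈ Set.Icc (0 : ℝ) T,
          |F i r| ≤ L * (|p i r| + (N : ℝ)⁻¹ * ∑ k, |p k r|) ^ 2) →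
        (∀ i, ∀ t ∈ Set.Icc (0 : ℝ) T,
          q i t = ∫ r in (0 : ℝ)..t,
            (F i r + a i r * q i r + (N : ℝ)⁻¹ * ∑ k, c i k r * q k r)) →
        ∀ i, ∀ t ∈ Set.Icc (0 : ℝ) T,
          |q i t| ≤ C' * ((if i = j then 1 else 0) + 1 / N)) := by
  set Cp : ℝ := (1 + L*T*Real.exp (2*L*T)) * Real.exp (L*T) with hCpdef
  have hCp0 : 0 ≤ Cp := by positivity
  set Kq : ℝ := 18*L*Cp^2 with hKqdef
  have hKq0 : 0 ≤ Kq := by positivity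
  constructor
  · exact ⟨Cp, fun N hN j a c _ _ haB hcB p hpc hpe =>
      part1_bound L T hL hT hN j a c haB hcB p hpc hpe⟩
  · refine ⟨Kq * (T + 2*L*T^2*Real.exp (2*L*T)) * Real.exp (L*T), ?_⟩
    intro N hN j a c _ _ haB hcB p hpc hpe q F hqc _ hFb hqe
    have hNne : (N:ℝ) ≠ 0 := Nat.cast_ne_zero.2 hN.ne'
    have hN1 : (1:ℝ) ≤ (N:ℝ) := by exact_mod_cast hN
    have hε : (0:ℝ) ≤ (N:ℝ)⁻¹ := by positivity
    have hε1 : (N:ℝ)⁻¹ ≤ 1 := by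
      rw [inv_le_one_iff₀]; right; exact hN1
    have hεd : 1/(N:ℝ) = (N:ℝ)⁻¹ := one_div _
    have hP := part1_bound L T hL hT hN j a c haB hcB p hpc hpe
    -- sums of the indicator
    have esum : ∑ k : Fin N, ((if k = j then (1:ℝ) else 0) + 1/(N:ℝ)) = 2 := by
      rw [Finset.sum_add_distrib]
      simp only [Finset.sum_ite_eq', Finset.mem_univ, if_true, Finset.sum_const,
        Finset.card_univ, Fintype.card_fin, nsmul_eq_mul]
      field_simp
      norm_num
    -- source bound
    have hgB : ∀ i, ∀ r ∈ Set.Icc (0:ℝ) T,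
        |F i r| ≤ Kq * ((if i = j then (1:ℝ) else 0) + 1/(N:ℝ)) := by
      intro i r hr
      set m : ℝ := (if i = j then (1:ℝ) else 0) + 1/(N:ℝ) with hmdef
      have hm0 : 0 ≤ m := by
        rw [hmdef, hεd]; split <;> linarith
      have hm2 : m ≤ 2 := by
        rw [hmdef, hεd]; split <;> linarith
      have hmε : (N:ℝ)⁻¹ ≤ m := by
        rw [hmdef, hεd]; split <;> linarith
      have hp1 : |p i r| ≤ Cp * m := hP i r hr
      have hp2 : ∑ k, |p k r| ≤ 2 * Cp := by
        calc ∑ k, |p k r| ≤ ∑ k, Cp * ((if k = j then (1:ℝ) else 0) + 1/(N:ℝ)) :=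
              Finset.sum_le_sum fun k _ => hP k r hr
          _ = Cp * 2 := by rw [← Finset.mul_sum, esum]
          _ = 2 * Cp := by ring
      have hx0 : 0 ≤ |p i r| + (N:ℝ)⁻¹ * ∑ k, |p k r| :=
        add_nonneg (abs_nonneg _)
          (mul_nonneg hε (Finset.sum_nonneg fun k _ => abs_nonneg _))
      have hx : |p i r| + (N:ℝ)⁻¹ * ∑ k, |p k r| ≤ 3 * Cp * m := by
        have h1 : (N:ℝ)⁻¹ * ∑ k, |p k r| ≤ (N:ℝ)⁻¹ * (2*Cp) :=
          mul_le_mul_of_nonneg_left hp2 hε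
        have h2 : (N:ℝ)⁻¹ * (2*Cp) ≤ m * (2*Cp) :=
          mul_le_mul_of_nonneg_right hmε (by positivity)
        have h3 := add_le_add hp1 (h1.trans h2)
        nlinarith [h3]
      have h5 : (|p i r| + (N:ℝ)⁻¹ * ∑ k, |p k r|)^2 ≤ (3*Cp*m)^2 :=
        pow_le_pow_left₀ hx0 hx 2
      have h6 : 0 ≤ L*Cp^2*m*(2-m) :=
        mul_nonneg (mul_nonneg (mul_nonneg hL (sq_nonneg Cp)) hm0) (by linarith)
      calc |F i r| ≤ L * (|p i r| + (N:ℝ)⁻¹ * ∑ k, |p k r|)^2 := hFb i r hr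
        _ ≤ L * (3*Cp*m)^2 := mul_le_mul_of_nonneg_left h5 hL
        _ ≤ Kq * m := by rw [hKqdef]; nlinarith
    have hkey := key_sys hN hL hT a c F (fun _ => (0:ℝ))
      (fun i => Kq * ((if i = j then (1:ℝ) else 0) + 1/(N:ℝ))) q haB hcB hgB
      (fun i => by
        have : (0:ℝ) ≤ (if i = j then (1:ℝ) else 0) + 1/(N:ℝ) := by
          rw [hεd]; split <;> [linarith [hε]; linarith [hε]]
        exact mul_nonneg hKq0 this)
      hqc
      (fun i t ht => by simp only [zero_add]; exact hqe i t ht)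
    intro i t ht
    have h := hkey i t ht
    simp only [abs_zero, Finset.sum_const, smul_zero, mul_zero, zero_add, add_zero] at h
    rw [← Finset.mul_sum, esum] at h
    have hE1 : (0:ℝ) < Real.exp (L*T) := Real.exp_pos _
    have hE2 : (0:ℝ) ≤ Real.exp (2*L*T) := Real.exp_nonneg _
    have hm0 : (0:ℝ) ≤ (if i = j then (1:ℝ) else 0) + 1/(N:ℝ) := by
      rw [hεd]; split <;> linarith
    have hmε : (N:ℝ)⁻¹ ≤ (if i = j then (1:ℝ) else 0) + 1/(N:ℝ) := by
      rw [hεd]; split <;> linarith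
    set m : ℝ := (if i = j then (1:ℝ) else 0) + 1/(N:ℝ) with hm
    refine h.trans ?_
    have h7 : L * T * (T * (Kq * 2) * Real.exp (2*L*T)) * (N:ℝ)⁻¹
        ≤ 2*L*T^2*Real.exp (2*L*T) * Kq * m := by
      have h8 : L * T * (T * (Kq * 2) * Real.exp (2*L*T)) * (N:ℝ)⁻¹
          = (2*L*T^2*Real.exp (2*L*T) * Kq) * (N:ℝ)⁻¹ := by ring
      rw [h8]
      exact mul_le_mul_of_nonneg_left hmε (by positivity)
    calc (T * (Kq * m) + L * T * (T * (Kq * 2) * Real.exp (2*L*T)) * (N:ℝ)⁻¹)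
          * Real.exp (L*T)
        ≤ (T * (Kq * m) + 2*L*T^2*Real.exp (2*L*T) * Kq * m) * Real.exp (L*T) := by
          apply mul_le_mul_of_nonneg_right _ hE1.le
          linarith [h7]
      _ = Kq * (T + 2*L*T^2*Real.exp (2*L*T)) * Real.exp (L*T) * m := by ring
end
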